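/- Let X ∈ ℝ₊^{n₁×m₁} and let A be the (n₁+m₁)×(n₁+m₁) symmetric matrix with zero diagonal blocks and off-diagonal blocks X and Xᵀ. Then st₊(A) = 2·rk₊(X). -/

import Mathlib

open Matrix

noncomputable def sntRank {m : Type*} [Fintype m] (A : Matrix m m ℝ) : ℕ :=
  sInf {k : ℕ | ∃ B : Matrix m (Fin k) ℝ, ∃ C : Matrix (Fin k) (Fin k) ℝ,
    (∀ i j, 0 ≤ B i j) ∧ (∀ i j, 0 ≤ C i j) ∧ C.IsSymm ∧ A = B * C * Bᵀ}


noncomputable def nnRank {m n : Type*} [Fintype m] [Fintype n] (A : Matrix m n ℝ) : ℕ :=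
  sInf {k : ℕ | ∃ U : Matrix m (Fin k) ℝ, ∃ V : Matrix n (Fin k) ℝ,
    (∀ i j, 0 ≤ U i j) ∧ (∀ i j, 0 ≤ V i j) ∧ A = U * Vᵀ}

/-- Upper bound construction: from a nonnegative factorization of rank `r`,
build a symmetric nonnegative trifactorization of size `2*r`. -/
lemma snt_mem_of_nn {n₁ m₁ r : ℕ} (X : Matrix (Fin n₁) (Fin m₁) ℝ)
    (U : Matrix (Fin n₁) (Fin r) ℝ) (V : Matrix (Fin m₁) (Fin r) ℝ)
    (hU : ∀ i j, 0 ≤ U i j) (hV : ∀ i j, 0 ≤ V i j) (hX : X = U * Vᵀ) :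
    ∃ B : Matrix (Fin n₁ ⊕ Fin m₁) (Fin (2*r)) ℝ, ∃ C : Matrix (Fin (2*r)) (Fin (2*r)) ℝ,
    (∀ i j, 0 ≤ B i j) ∧ (∀ i j, 0 ≤ C i j) ∧ C.IsSymm ∧
    (Matrix.fromBlocks 0 X Xᵀ 0) = B * C * Bᵀ := by
  set e : Fin (2*r) ≃ Fin r ⊕ Fin r := (finCongr (two_mul r)).trans finSumFinEquiv.symm with he
  refine ⟨(Matrix.fromBlocks U 0 0 V).submatrix id e,
    (Matrix.fromBlocks 0 1 1 0).submatrix e e, ?_, ?_, ?_, ?_⟩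
  · intro i j
    rcases i with i | i <;> rcases h : e j with a | a <;>
      simp [Matrix.submatrix_apply, Matrix.fromBlocks, h, hU, hV]
  · intro i j
    rcases h : e i with a | a <;> rcases h2 : e j with b | b <;>
      simp [Matrix.submatrix_apply, Matrix.fromBlocks, h, h2, Matrix.one_apply] <;> positivity
  · unfold Matrix.IsSymm
    rw [Matrix.transpose_submatrix, Matrix.fromBlocks_transpose]
    simp
  · rw [Matrix.transpose_submatrix, Matrix.submatrix_mul_equiv, Matrix.submatrix_mul_equiv,
      Matrix.submatrix_id_id, Matrix.fromBlocks_multiply, Matrix.fromBlocks_transpose,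
      Matrix.fromBlocks_multiply]
    simp [hX, Matrix.transpose_mul]

open Classical in
/-- Lower bound: any symmetric nonnegative trifactorization of the bipartite matrix
has size at least twice the nonnegative rank. -/
lemma two_nnRank_le {n₁ m₁ k : ℕ} (X : Matrix (Fin n₁) (Fin m₁) ℝ)
    (B : Matrix (Fin n₁ ⊕ Fin m₁) (Fin k) ℝ) (C : Matrix (Fin k) (Fin k) ℝ)
    (hB : ∀ i j, 0 ≤ B i j) (hC : ∀ i j, 0 ≤ C i j)
    (hA : (Matrix.fromBlocks 0 X Xᵀ 0 : Matrix (Fin n₁ ⊕ Fin m₁) (Fin n₁ ⊕ Fin m₁) ℝ)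
      = B * C * Bᵀ) :
    2 * nnRank X ≤ k := by
  have hentry : ∀ x y, (B * C * Bᵀ) x y = ∑ a, ∑ b, B x a * C a b * B y b := by
    intro x y
    simp only [Matrix.mul_apply, Matrix.transpose_apply, Finset.sum_mul]
    rw [Finset.sum_comm]
  have hzero : ∀ x y, (Matrix.fromBlocks (0 : Matrix (Fin n₁) (Fin n₁) ℝ) X Xᵀ 0) x y = 0 →
      ∀ a b, B x a * C a b * B y b = 0 := by
    intro x y h a b
    have h1 : ∑ a, ∑ b, B x a * C a b * B y b = 0 := by
      rw [← hentry, ← hA, h]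
    have hnn : ∀ a : Fin k, ∀ b : Fin k, 0 ≤ B x a * C a b * B y b := fun a b =>
      mul_nonneg (mul_nonneg (hB _ _) (hC _ _)) (hB _ _)
    have h2 := (Finset.sum_eq_zero_iff_of_nonneg (fun a _ =>
      Finset.sum_nonneg (fun b _ => hnn a b))).mp h1 a (Finset.mem_univ a)
    exact (Finset.sum_eq_zero_iff_of_nonneg (fun b _ => hnn a b)).mp h2 b (Finset.mem_univ b)
  have hLL := fun (i i' : Fin n₁) => hzero (Sum.inl i) (Sum.inl i') rfl
  have hRR := fun (j j' : Fin m₁) => hzero (Sum.inr j) (Sum.inr j') rfl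
  have hXab : ∀ i j, X i j = ∑ a, ∑ b, B (Sum.inl i) a * C a b * B (Sum.inr j) b := by
    intro i j
    have := congrFun (congrFun hA (Sum.inl i)) (Sum.inr j)
    simpa [hentry] using this
  set P : Fin k → Prop := fun a => ∃ i, B (Sum.inl i) a ≠ 0 with hP
  set Q : Fin k → Prop := fun a => ∃ j, B (Sum.inr j) a ≠ 0 with hQ
  have hPP : ∀ a b, P a → P b → C a b = 0 := by
    rintro a b ⟨i, hi⟩ ⟨i', hi'⟩
    have := hLL i i' a b
    rcases mul_eq_zero.mp this with h | h
    · rcases mul_eq_zero.mp h with h | h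
      · exact absurd h hi
      · exact h
    · exact absurd h hi'
  have hQQ : ∀ a b, Q a → Q b → C a b = 0 := by
    rintro a b ⟨j, hj⟩ ⟨j', hj'⟩
    have := hRR j j' a b
    rcases mul_eq_zero.mp this with h | h
    · rcases mul_eq_zero.mp h with h | h
      · exact absurd h hj
      · exact h
    · exact absurd h hj'
  have hnotP : ∀ a, ¬ P a → ∀ i, B (Sum.inl i) a = 0 := by
    intro a ha i; by_contra h; exact ha ⟨i, h⟩
  have hnotQ : ∀ a, ¬ Q a → ∀ j, B (Sum.inr j) a = 0 := by
    intro a ha j; by_contra h; exact ha ⟨j, h⟩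
  set S : Finset (Fin k) := Finset.univ.filter (fun a => P a ∧ ¬ Q a) with hS
  set T : Finset (Fin k) := Finset.univ.filter (fun a => Q a ∧ ¬ P a) with hT
  have h1 : nnRank X ≤ S.card := by
    set e := S.equivFin.symm with he
    refine Nat.sInf_le ⟨fun i c => B (Sum.inl i) (e c),
      fun j c => ∑ b, C (e c) b * B (Sum.inr j) b, fun i c => hB _ _,
      fun j c => Finset.sum_nonneg fun b _ => mul_nonneg (hC _ _) (hB _ _), ?_⟩
    ext i j
    show X i j = ∑ c : Fin S.card, B (Sum.inl i) (e c).1 * ∑ b, C (e c).1 b * B (Sum.inr j) b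
    have step1 : X i j = ∑ a, B (Sum.inl i) a * ∑ b, C a b * B (Sum.inr j) b := by
      rw [hXab i j]
      congr 1; ext a
      rw [Finset.mul_sum]
      congr 1; ext b; ring
    rw [step1]
    calc ∑ a : Fin k, B (Sum.inl i) a * ∑ b, C a b * B (Sum.inr j) b
        = ∑ a ∈ S, B (Sum.inl i) a * ∑ b, C a b * B (Sum.inr j) b := ?_
      _ = ∑ a : S, B (Sum.inl i) a.1 * ∑ b, C a.1 b * B (Sum.inr j) b :=
          (Finset.sum_coe_sort S _).symm
      _ = ∑ c : Fin S.card, B (Sum.inl i) (e c).1 * ∑ b, C (e c).1 b * B (Sum.inr j) b :=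
          (Equiv.sum_comp e _).symm
    · refine (Finset.sum_subset (Finset.subset_univ S) ?_).symm
      intro a _ haS
      simp only [hS, Finset.mem_filter, Finset.mem_univ, true_and, not_and, not_not] at haS
      by_cases hPa : P a
      · have hQa := haS hPa
        have : ∑ b, C a b * B (Sum.inr j) b = 0 := by
          refine Finset.sum_eq_zero fun b _ => ?_
          by_cases hCab : C a b = 0
          · rw [hCab]; ring
          · have hbQ : ¬ Q b := fun hQb => hCab (hQQ a b hQa hQb)
            rw [hnotQ b hbQ j]; ring
        rw [this]; ring
      · rw [hnotP a hPa i]; ring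
  have h2 : nnRank X ≤ T.card := by
    set e := T.equivFin.symm with he
    refine Nat.sInf_le ⟨fun i c => ∑ a, B (Sum.inl i) a * C a (e c),
      fun j c => B (Sum.inr j) (e c),
      fun i c => Finset.sum_nonneg fun a _ => mul_nonneg (hB _ _) (hC _ _),
      fun j c => hB _ _, ?_⟩
    ext i j
    show X i j = ∑ c : Fin T.card, (∑ a, B (Sum.inl i) a * C a (e c).1) * B (Sum.inr j) (e c).1
    have step1 : X i j = ∑ b, (∑ a, B (Sum.inl i) a * C a b) * B (Sum.inr j) b := by
      rw [hXab i j, Finset.sum_comm]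
      congr 1; ext b
      rw [Finset.sum_mul]
    rw [step1]
    calc ∑ b : Fin k, (∑ a, B (Sum.inl i) a * C a b) * B (Sum.inr j) b
        = ∑ b ∈ T, (∑ a, B (Sum.inl i) a * C a b) * B (Sum.inr j) b := ?_
      _ = ∑ b : T, (∑ a, B (Sum.inl i) a * C a b.1) * B (Sum.inr j) b.1 :=
          (Finset.sum_coe_sort T _).symm
      _ = ∑ c : Fin T.card, (∑ a, B (Sum.inl i) a * C a (e c).1) * B (Sum.inr j) (e c).1 :=
          (Equiv.sum_comp e _).symm
    refine (Finset.sum_subset (Finset.subset_univ T) ?_).symm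
    intro b _ hbT
    simp only [hT, Finset.mem_filter, Finset.mem_univ, true_and, not_and, not_not] at hbT
    by_cases hQb : Q b
    · have hPb := hbT hQb
      have : ∑ a, B (Sum.inl i) a * C a b = 0 := by
        refine Finset.sum_eq_zero fun a _ => ?_
        by_cases hCab : C a b = 0
        · rw [hCab]; ring
        · have haP : ¬ P a := fun hPa => hCab (hPP a b hPa hPb)
          rw [hnotP a haP i]; ring
      rw [this]; ring
    · rw [hnotQ b hQb j]; ring
  have hdisj : Disjoint S T := by
    rw [Finset.disjoint_left]
    intro a haS haT
    simp only [hS, hT, Finset.mem_filter] at haS haT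
    exact haT.2.2 haS.2.1
  have hcard : S.card + T.card ≤ k := by
    have := Finset.card_le_univ (S ∪ T)
    rw [Finset.card_union_of_disjoint hdisj] at this
    simpa using this
  omega

theorem stmt_10 {n₁ m₁ : ℕ} (X : Matrix (Fin n₁) (Fin m₁) ℝ)
    (hX : ∀ i j, 0 ≤ X i j) :
    sntRank (Matrix.fromBlocks (0 : Matrix (Fin n₁) (Fin n₁) ℝ) X Xᵀ
      (0 : Matrix (Fin m₁) (Fin m₁) ℝ)) = 2 * nnRank X := by
  have hnnne : {k : ℕ | ∃ U : Matrix (Fin n₁) (Fin k) ℝ, ∃ V : Matrix (Fin m₁) (Fin k) ℝ,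
      (∀ i j, 0 ≤ U i j) ∧ (∀ i j, 0 ≤ V i j) ∧ X = U * Vᵀ}.Nonempty := by
    refine ⟨m₁, X, 1, hX, fun i j => ?_, by simp⟩
    by_cases h : i = j <;> simp [Matrix.one_apply, h]
  obtain ⟨U, V, hU, hV, hXUV⟩ := Nat.sInf_mem hnnne
  obtain ⟨B₀, C₀, hB₀, hC₀, hCs₀, hA₀⟩ := snt_mem_of_nn X U V hU hV hXUV
  have hmem : 2 * nnRank X ∈ {k : ℕ |
      ∃ B : Matrix (Fin n₁ ⊕ Fin m₁) (Fin k) ℝ, ∃ C : Matrix (Fin k) (Fin k) ℝ,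
      (∀ i j, 0 ≤ B i j) ∧ (∀ i j, 0 ≤ C i j) ∧ C.IsSymm ∧
      (Matrix.fromBlocks 0 X Xᵀ 0) = B * C * Bᵀ} := ⟨B₀, C₀, hB₀, hC₀, hCs₀, hA₀⟩
  refine le_antisymm (Nat.sInf_le hmem) ?_
  obtain ⟨B, C, hB, hC, hCs, hA⟩ := Nat.sInf_mem ⟨_, hmem⟩
  exact two_nnRank_le X B C hB hC hA
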